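/- For every natural number k and integer m, the coefficient identity Σ-free form of Lemma A.2 holds: C(−1/2, k)·C(m+k−1/2, 2k) = ((1/2)^{(k)} (m+1/2)^{(k)} (1/2−m)^{(k)}) / ((2k)! · k!), and consequently the formal power series Σ_k C(−1/2,k) C(m+k−1/2,2k) z^k converges for |z| < 4 and equals ₂F₁(1/2 − m, 1/2 + m; 1; z/4). -/

import Mathlib

/-- The generalized binomial coefficient `C(x, n) = x(x−1)⋯(x−n+1)/n!` over `ℂ`. -/
noncomputable def genBinomC (x : ℂ) (n : ℕ) : ℂ :=
  (∏ i ∈ Finset.range n, (x - i)) / n.factorial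

/-- The Gauss hypergeometric series `₂F₁(a,b;c;z) = Σ_n (a)^{(n)}(b)^{(n)}/((c)^{(n)} n!) zⁿ`. -/
noncomputable def hyp2F1 (a b c z : ℂ) : ℂ :=
  ∑' n : ℕ, ((ascPochhammer ℂ n).eval a * (ascPochhammer ℂ n).eval b)
    / ((ascPochhammer ℂ n).eval c * (n.factorial : ℂ)) * z ^ n

open Finset

private lemma asc_eval (n : ℕ) (x : ℂ) :
    (ascPochhammer ℂ n).eval x = ∏ i ∈ range n, (x + i) := by
  induction n with
  | zero => simp
  | succ n ih => rw [ascPochhammer_succ_right, prod_range_succ, ← ih]; simp [Polynomial.eval_mul]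

private lemma fact_two_mul (k : ℕ) :
    ((2*k).factorial : ℂ) = 4^k * k.factorial * (ascPochhammer ℂ k).eval (1/2) := by
  induction k with
  | zero => simp
  | succ k ih =>
    rw [show 2*(k+1) = (2*k)+1+1 by ring, Nat.factorial_succ, Nat.factorial_succ,
      Nat.factorial_succ, ascPochhammer_succ_right]
    simp only [Polynomial.eval_mul, Polynomial.eval_add, Polynomial.eval_X, Polynomial.eval_natCast]
    push_cast [ih]
    ring

private lemma E_half_ne (k : ℕ) : (ascPochhammer ℂ k).eval (1/2) ≠ 0 := by
  rw [asc_eval]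
  refine Finset.prod_ne_zero_iff.mpr fun i _ h => ?_
  have h2 : ((2*i+1 : ℕ) : ℂ) = 0 := by push_cast; linear_combination 2*h
  norm_cast at h2

private lemma prod_half (k : ℕ) :
    ∏ i ∈ range k, ((-(1/2) : ℂ) - i) = (-1)^k * (ascPochhammer ℂ k).eval (1/2) := by
  rw [asc_eval]
  calc ∏ i ∈ range k, ((-(1/2) : ℂ) - i)
      = ∏ i ∈ range k, (-1) * ((1:ℂ)/2 + i) := prod_congr rfl fun i _ => by ring
    _ = (-1)^k * ∏ i ∈ range k, ((1:ℂ)/2 + i) := by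
        rw [prod_mul_distrib, prod_const, card_range]

private lemma prod_big (m : ℤ) (k : ℕ) :
    ∏ i ∈ range (2*k), ((m : ℂ) + (k : ℂ) - 1/2 - i)
      = (-1)^k * (ascPochhammer ℂ k).eval ((m:ℂ) + 1/2)
        * (ascPochhammer ℂ k).eval (1/2 - (m:ℂ)) := by
  rw [two_mul, Finset.prod_range_add]
  have h1 : ∏ i ∈ range k, ((m : ℂ) + (k : ℂ) - 1/2 - i)
      = (ascPochhammer ℂ k).eval ((m:ℂ) + 1/2) := by
    rw [asc_eval, ← Finset.prod_range_reflect]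
    refine Finset.prod_congr rfl fun i hi => ?_
    have hik : i < k := Finset.mem_range.mp hi
    have hc : ((k - 1 - i : ℕ) : ℂ) = (k:ℂ) - 1 - i := by
      rw [show k - 1 - i = k - (1 + i) by omega, Nat.cast_sub (by omega)]; push_cast; ring
    rw [hc]; ring
  have h2 : ∏ i ∈ range k, ((m : ℂ) + (k : ℂ) - 1/2 - ((k + i : ℕ) : ℂ))
      = (-1)^k * (ascPochhammer ℂ k).eval (1/2 - (m:ℂ)) := by
    rw [asc_eval]
    calc ∏ i ∈ range k, ((m : ℂ) + (k : ℂ) - 1/2 - ((k + i : ℕ) : ℂ))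
        = ∏ i ∈ range k, (-1) * ((1:ℂ)/2 - m + i) := by
          refine prod_congr rfl fun i _ => ?_; push_cast; ring
      _ = (-1)^k * ∏ i ∈ range k, ((1:ℂ)/2 - m + i) := by
          rw [prod_mul_distrib, prod_const, card_range]
  rw [h1, h2]; ring

private lemma coeff_id (m : ℤ) (k : ℕ) :
    genBinomC (-(1 / 2)) k * genBinomC ((m : ℂ) + (k : ℂ) - 1 / 2) (2 * k)
      = ((ascPochhammer ℂ k).eval (1 / 2) * (ascPochhammer ℂ k).eval ((m : ℂ) + 1 / 2)
          * (ascPochhammer ℂ k).eval (1 / 2 - (m : ℂ)))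
        / (((2 * k).factorial : ℂ) * (k.factorial : ℂ)) := by
  rw [genBinomC, genBinomC, prod_half, prod_big, div_mul_div_comm,
    mul_comm (k.factorial : ℂ) ((2*k).factorial : ℂ)]
  congr 1
  have h : ((-1:ℂ))^k * (-1)^k = 1 := by
    rw [← pow_add, ← two_mul]; exact Even.neg_one_pow ⟨k, two_mul k⟩
  linear_combination ((ascPochhammer ℂ k).eval (1/2) * (ascPochhammer ℂ k).eval ((m:ℂ) + 1/2)
    * (ascPochhammer ℂ k).eval (1/2 - (m:ℂ))) * h

private lemma term_eq (m : ℤ) (k : ℕ) (z : ℂ) :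
    genBinomC (-(1 / 2)) k * genBinomC ((m : ℂ) + (k : ℂ) - 1 / 2) (2 * k) * z ^ k
      = ((ascPochhammer ℂ k).eval (1/2 - (m:ℂ)) * (ascPochhammer ℂ k).eval (1/2 + (m:ℂ)))
        / ((ascPochhammer ℂ k).eval 1 * (k.factorial : ℂ)) * (z/4) ^ k := by
  rw [coeff_id, ascPochhammer_eval_one, fact_two_mul,
    show (m:ℂ) + 1/2 = 1/2 + m from add_comm _ _]
  have hE : (ascPochhammer ℂ k).eval (1/2) ≠ 0 := E_half_ne k
  have hf : (k.factorial : ℂ) ≠ 0 := Nat.cast_ne_zero.mpr k.factorial_ne_zero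
  have h4 : (4:ℂ) ≠ 0 := by norm_num
  rw [div_pow]
  field_simp

private lemma fact_prod (k : ℕ) : (k.factorial : ℂ) = ∏ i ∈ range k, ((i:ℂ) + 1) := by
  rw [← prod_range_add_one_eq_factorial]; push_cast; rfl

private noncomputable def uu (m : ℤ) (i : ℕ) : ℂ :=
  ((1:ℂ)/2 - m + i) * ((1:ℂ)/2 + m + i) / (((i:ℂ) + 1) * ((i:ℂ) + 1))

private lemma A_eq (m : ℤ) (k : ℕ) :
    (ascPochhammer ℂ k).eval (1/2 - (m:ℂ)) * (ascPochhammer ℂ k).eval (1/2 + (m:ℂ))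
      / ((k.factorial : ℂ) * (k.factorial : ℂ)) = ∏ i ∈ range k, uu m i := by
  rw [asc_eval, asc_eval, fact_prod, ← prod_mul_distrib, ← prod_mul_distrib,
    ← prod_div_distrib]
  rfl

private lemma uu_norm_le (m : ℤ) (i : ℕ) (hi : m.natAbs ≤ i) : ‖uu m i‖ ≤ 1 := by
  have hc : uu m i = ((((1:ℝ)/2 - m + i) * ((1:ℝ)/2 + m + i) / (((i:ℝ) + 1) * ((i:ℝ) + 1)) : ℝ) : ℂ) := by
    rw [uu]; push_cast; ring
  rw [hc, Complex.norm_real, Real.norm_eq_abs]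
  have him : |(m:ℝ)| ≤ (i:ℝ) := by
    rw [← Int.cast_abs]
    exact_mod_cast (Int.abs_eq_natAbs m ▸ (Int.ofNat_le.mpr hi : (m.natAbs : ℤ) ≤ i))
  have hm2 : (m:ℝ)^2 ≤ (i:ℝ)^2 := by nlinarith [abs_nonneg (m:ℝ), sq_abs (m:ℝ)]
  have hpos : (0:ℝ) < ((i:ℝ) + 1) * ((i:ℝ) + 1) := by positivity
  rw [abs_div, abs_of_pos hpos, div_le_one hpos]
  rw [abs_le]
  constructor <;> nlinarith [Nat.cast_nonneg (α := ℝ) i]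

private lemma A_bound (m : ℤ) :
    ∃ C : ℝ, 0 ≤ C ∧ ∀ k : ℕ, ‖∏ i ∈ range k, uu m i‖ ≤ C := by
  set N := m.natAbs with hN
  set w : ℕ → ℝ := fun i => if i < N then max 1 ‖uu m i‖ else 1 with hw
  have hw1 : ∀ i, 1 ≤ w i := by
    intro i; rw [hw]; dsimp only; split
    · exact le_max_left _ _
    · exact le_rfl
  have hC1 : (1:ℝ) ≤ ∏ i ∈ range N, w i := by
    calc (1:ℝ) = ∏ _i ∈ range N, 1 := by simp
      _ ≤ ∏ i ∈ range N, w i := prod_le_prod (fun _ _ => zero_le_one) fun i _ => hw1 i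
  refine ⟨∏ i ∈ range N, w i, le_trans zero_le_one hC1, fun k => ?_⟩
  calc ‖∏ i ∈ range k, uu m i‖ = ∏ i ∈ range k, ‖uu m i‖ := norm_prod _ _
    _ ≤ ∏ i ∈ range k, w i := by
        refine prod_le_prod (fun i _ => norm_nonneg _) fun i _ => ?_
        rw [hw]; dsimp only; split
        · exact le_max_right _ _
        · exact uu_norm_le m i (by omega)
    _ = ∏ i ∈ (range k).filter (· < N), w i := by
        refine (prod_filter_of_ne fun i _ hne => ?_).symm
        by_contra hiN
        exact hne (by rw [hw]; simp [hiN])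
    _ ≤ ∏ i ∈ range N, w i := by
        have hsub : (range k).filter (· < N) ⊆ range N := fun i hi =>
          mem_range.mpr (mem_filter.mp hi).2
        rw [← Finset.prod_sdiff hsub]
        refine le_mul_of_one_le_left ?_ ?_
        · exact prod_nonneg fun i _ => le_trans zero_le_one (hw1 i)
        · calc (1:ℝ) = ∏ _i ∈ range N \ (range k).filter (· < N), 1 := by simp
            _ ≤ _ := prod_le_prod (fun _ _ => zero_le_one) fun i _ => hw1 i

theorem genBinom_series_eq_hypergeometric (m : ℤ) :
    (∀ k : ℕ,
      genBinomC (-(1 / 2)) k * genBinomC ((m : ℂ) + (k : ℂ) - 1 / 2) (2 * k)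
        = ((ascPochhammer ℂ k).eval (1 / 2) * (ascPochhammer ℂ k).eval ((m : ℂ) + 1 / 2)
            * (ascPochhammer ℂ k).eval (1 / 2 - (m : ℂ)))
          / (((2 * k).factorial : ℂ) * (k.factorial : ℂ))) ∧
    ∀ z : ℂ, ‖z‖ < 4 →
      Summable (fun k : ℕ =>
        genBinomC (-(1 / 2)) k * genBinomC ((m : ℂ) + (k : ℂ) - 1 / 2) (2 * k) * z ^ k) ∧
      (∑' k : ℕ,
          genBinomC (-(1 / 2)) k * genBinomC ((m : ℂ) + (k : ℂ) - 1 / 2) (2 * k) * z ^ k)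
        = hyp2F1 (1 / 2 - (m : ℂ)) (1 / 2 + (m : ℂ)) 1 (z / 4) := by
  refine ⟨coeff_id m, fun z hz => ?_⟩
  have hr : ‖z/4‖ < 1 := by
    rw [norm_div]
    rw [show ‖(4:ℂ)‖ = 4 by norm_num]
    rw [div_lt_one (by norm_num)]
    exact hz
  obtain ⟨C, hC0, hC⟩ := A_bound m
  have hsum : Summable (fun k : ℕ =>
      ((ascPochhammer ℂ k).eval (1/2 - (m:ℂ)) * (ascPochhammer ℂ k).eval (1/2 + (m:ℂ)))
        / ((ascPochhammer ℂ k).eval 1 * (k.factorial : ℂ)) * (z/4) ^ k) := by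
    refine Summable.of_norm_bounded (g := fun k => C * ‖z/4‖ ^ k)
      ((summable_geometric_of_lt_one (norm_nonneg _) hr).mul_left C) fun k => ?_
    rw [norm_mul, norm_pow]
    refine mul_le_mul_of_nonneg_right ?_ (pow_nonneg (norm_nonneg _) k)
    rw [ascPochhammer_eval_one, A_eq]
    exact hC k
  have hfun : ∀ k : ℕ,
      genBinomC (-(1 / 2)) k * genBinomC ((m : ℂ) + (k : ℂ) - 1 / 2) (2 * k) * z ^ k
        = ((ascPochhammer ℂ k).eval (1/2 - (m:ℂ)) * (ascPochhammer ℂ k).eval (1/2 + (m:ℂ)))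
          / ((ascPochhammer ℂ k).eval 1 * (k.factorial : ℂ)) * (z/4) ^ k := fun k => term_eq m k z
  constructor
  · exact (summable_congr hfun).mpr hsum
  · rw [hyp2F1]
    exact tsum_congr hfun
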